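/- For any B-concave function f : ℤⁿ → ℝ ∪ {-∞} with finite effective domain, every edge (1-dimensional face) of the regular subdivision of dom(f) induced by f is parallel to some e_i or to e_i ± e_j with i ≠ j. -/

import Mathlib

def eZ (n : ℕ) (i : Fin n) : Fin n → ℤ := fun j => if j = i then 1 else 0

def toR {n : ℕ} (x : Fin n → ℤ) : Fin n → ℝ := fun i => (x i : ℝ)

def dotR {n : ℕ} (u : Fin n → ℝ) (x : Fin n → ℤ) : ℝ := ∑ i, u i * (x i : ℝ)

def BConcave {n : ℕ} (f : (Fin n → ℤ) → EReal) : Prop :=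
  ∀ x, f x ≠ ⊥ → ∀ y, f y ≠ ⊥ → ∀ i : Fin n, y i < x i →
    (f x + f y ≤ f (x - eZ n i) + f (y + eZ n i)) ∨
    (∃ j, x j < y j ∧ f x + f y ≤ f (x - eZ n i + eZ n j) + f (y + eZ n i - eZ n j)) ∨
    (∃ j, j ≠ i ∧ y j < x j ∧ f x + f y ≤ f (x - eZ n i - eZ n j) + f (y + eZ n i + eZ n j))

lemma toR_sub {n : ℕ} (a b : Fin n → ℤ) : toR (a - b) = toR a - toR b := by
  funext c
  simp [toR]

lemma dotR_pair_eq {n : ℕ} (w : Fin n → ℝ) {a b c d : Fin n → ℤ} (h : a + b = c + d) :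
    dotR w a + dotR w b = dotR w c + dotR w d := by
  unfold dotR
  rw [← Finset.sum_add_distrib, ← Finset.sum_add_distrib]
  refine Finset.sum_congr rfl fun i _ => ?_
  have h0 : a i + b i = c i + d i := congrFun h i
  have h1 : (a i : ℝ) + b i = (c i : ℝ) + d i := by exact_mod_cast h0
  rw [← mul_add, ← mul_add, h1]

/-- Exchange step: from two points of the maximizer set `F` differing in coordinate `i`,
B-concavity produces a pair of points of `F` whose difference is `e_i`, `e_i + e_j` or
`e_i - e_j` with `i ≠ j`. -/
lemma bconcave_step {n : ℕ} (f : (Fin n → ℤ) → EReal) (hB : BConcave f) (w : Fin n → ℝ)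
    (F : Set (Fin n → ℤ))
    (hF : F = {x | f x ≠ ⊥ ∧
      ∀ y, f y ≠ ⊥ → ((dotR w y : ℝ) : EReal) + f y ≤ ((dotR w x : ℝ) : EReal) + f x})
    {x y : Fin n → ℤ} (hx : x ∈ F) (hy : y ∈ F) {i : Fin n} (hlt : y i < x i) :
    ∃ d : Fin n → ℤ,
      ((∃ i, d = eZ n i) ∨
       (∃ i j, i ≠ j ∧ (d = eZ n i + eZ n j ∨ d = eZ n i - eZ n j))) ∧
      (∃ i0, d i0 = 1) ∧ ∃ p ∈ F, ∃ q ∈ F, p - q = d := by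
  subst hF
  obtain ⟨hxb, hxmax⟩ := hx
  obtain ⟨hyb, hymax⟩ := hy
  -- generic step: from the B-concavity inequality, one of the two exchanged points
  -- is again a maximizer
  have key : ∀ x' y' : Fin n → ℤ, x + y = x' + y' → f x + f y ≤ f x' + f y' →
      (x' ∈ {x | f x ≠ ⊥ ∧
        ∀ y, f y ≠ ⊥ → ((dotR w y : ℝ) : EReal) + f y ≤ ((dotR w x : ℝ) : EReal) + f x}) ∨
      (y' ∈ {x | f x ≠ ⊥ ∧
        ∀ y, f y ≠ ⊥ → ((dotR w y : ℝ) : EReal) + f y ≤ ((dotR w x : ℝ) : EReal) + f x}) := by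
    intro x' y' hsum hineq
    have hRHSb : f x' + f y' ≠ ⊥ := by
      intro hbot
      rw [hbot, le_bot_iff, EReal.add_eq_bot_iff] at hineq
      tauto
    have hx'b : f x' ≠ ⊥ := fun h => hRHSb (by rw [h, EReal.bot_add])
    have hy'b : f y' ≠ ⊥ := fun h => hRHSb (by rw [h, EReal.add_bot])
    set g : (Fin n → ℤ) → EReal := fun z => ((dotR w z : ℝ) : EReal) + f z with hg
    have hyM : g y = g x := le_antisymm (hxmax y hyb) (hymax x hxb)
    have ha : g x' ≤ g x := hxmax x' hx'b
    have hb : g y' ≤ g x := hxmax y' hy'b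
    have hdot : dotR w x + dotR w y = dotR w x' + dotR w y' := dotR_pair_eq w hsum
    have hsplit : ∀ a b : Fin n → ℤ,
        g a + g b = ((dotR w a + dotR w b : ℝ) : EReal) + (f a + f b) := by
      intro a b
      simp only [hg, EReal.coe_add]
      exact add_add_add_comm _ _ _ _
    have hsum2 : g x + g y ≤ g x' + g y' := by
      rw [hsplit x y, hsplit x' y', hdot]
      exact add_le_add_right hineq _
    have hor : g x' = g x ∨ g y' = g x := by
      by_contra hc
      push_neg at hc
      have h1 : g x' < g x := lt_of_le_of_ne ha hc.1
      have h2 : g y' < g x := lt_of_le_of_ne hb hc.2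
      have : g x' + g y' < g x + g x := EReal.add_lt_add h1 h2
      rw [hyM] at hsum2
      exact absurd (lt_of_le_of_lt hsum2 this) (lt_irrefl _)
    rcases hor with h | h
    · exact Or.inl ⟨hx'b, fun z hz => (hxmax z hz).trans_eq h.symm⟩
    · exact Or.inr ⟨hy'b, fun z hz => (hxmax z hz).trans_eq h.symm⟩
  rcases hB x hxb y hyb i hlt with h1 | ⟨j, hj, h2⟩ | ⟨j, hji, hjlt, h3⟩
  · refine ⟨eZ n i, Or.inl ⟨i, rfl⟩, ⟨i, by simp [eZ]⟩, ?_⟩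
    rcases key (x - eZ n i) (y + eZ n i) (by ring) h1 with hm | hm
    · exact ⟨x, ⟨hxb, hxmax⟩, x - eZ n i, hm, by ring⟩
    · exact ⟨y + eZ n i, hm, y, ⟨hyb, hymax⟩, by ring⟩
  · have hij : i ≠ j := by
      intro h; rw [h] at hlt; exact absurd hj (lt_asymm hlt)
    refine ⟨eZ n i - eZ n j, Or.inr ⟨i, j, hij, Or.inr rfl⟩, ⟨i, by simp [eZ, hij]⟩, ?_⟩
    rcases key (x - eZ n i + eZ n j) (y + eZ n i - eZ n j) (by ring) h2 with hm | hm
    · exact ⟨x, ⟨hxb, hxmax⟩, x - eZ n i + eZ n j, hm, by ring⟩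
    · exact ⟨y + eZ n i - eZ n j, hm, y, ⟨hyb, hymax⟩, by ring⟩
  · have hij : i ≠ j := hji.symm
    refine ⟨eZ n i + eZ n j, Or.inr ⟨i, j, hij, Or.inl rfl⟩, ⟨i, by simp [eZ, hij]⟩, ?_⟩
    rcases key (x - eZ n i - eZ n j) (y + eZ n i + eZ n j) (by ring) h3 with hm | hm
    · exact ⟨x, ⟨hxb, hxmax⟩, x - eZ n i - eZ n j, hm, by ring⟩
    · exact ⟨y + eZ n i + eZ n j, hm, y, ⟨hyb, hymax⟩, by ring⟩

/-- For a B-concave function `f` with finite effective domain, every edge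
(1-dimensional upper face, i.e. a maximizer set in direction `(w,1)` whose
span is 1-dimensional) of the regular subdivision of `dom f` induced by `f`
is parallel to some `e_i` or `e_i ± e_j` with `i ≠ j`. -/
theorem bconcave_edge_directions {n : ℕ} (f : (Fin n → ℤ) → EReal)
    (hB : BConcave f) (hfin : {x | f x ≠ ⊥}.Finite) (hne : {x | f x ≠ ⊥}.Nonempty)
    (w : Fin n → ℝ)
    (F : Set (Fin n → ℤ))
    (hF : F = {x | f x ≠ ⊥ ∧
      ∀ y, f y ≠ ⊥ → ((dotR w y : ℝ) : EReal) + f y ≤ ((dotR w x : ℝ) : EReal) + f x})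
    (hdim : Module.finrank ℝ (vectorSpan ℝ (toR '' F)) = 1) :
    ∃ v : Fin n → ℤ,
      ((∃ i, v = eZ n i) ∨
       (∃ i j, i ≠ j ∧ (v = eZ n i + eZ n j ∨ v = eZ n i - eZ n j))) ∧
      ∀ x ∈ F, ∀ y ∈ F, ∃ k : ℤ, x - y = k • v := by
  -- F contains two distinct points
  have h2 : ∃ x ∈ F, ∃ y ∈ F, x ≠ y := by
    by_contra hc
    push_neg at hc
    have hsub : (toR '' F).Subsingleton := by
      rintro a ⟨x, hx, rfl⟩ b ⟨y, hy, rfl⟩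
      rw [hc x hx y hy]
    rcases hsub.eq_empty_or_singleton with h | ⟨a, h⟩
    · rw [h, vectorSpan_empty] at hdim
      simp [finrank_bot] at hdim
    · rw [h, vectorSpan_singleton] at hdim
      simp [finrank_bot] at hdim
  obtain ⟨x₀, hx₀, y₀, hy₀, hne'⟩ := h2
  obtain ⟨i, hi⟩ := Function.ne_iff.mp hne'
  obtain ⟨d, hshape, ⟨i0, hi0⟩, p, hp, q, hq, hpq⟩ :=
    (lt_or_gt_of_ne hi).elim
      (fun h => bconcave_step f hB w F hF hy₀ hx₀ h)
      (fun h => bconcave_step f hB w F hF hx₀ hy₀ h)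
  refine ⟨d, hshape, ?_⟩
  have hd0 : toR d ≠ 0 := by
    intro h
    have := congrFun h i0
    simp [toR, hi0] at this
  have hdV : toR d ∈ vectorSpan ℝ (toR '' F) := by
    have h := vsub_mem_vectorSpan ℝ (Set.mem_image_of_mem toR hp)
      (Set.mem_image_of_mem toR hq)
    have : toR p -ᵥ toR q = toR d := by
      rw [← hpq, toR_sub]; rfl
    rwa [this] at h
  have hspan : Submodule.span ℝ {toR d} = vectorSpan ℝ (toR '' F) := by
    apply Submodule.eq_of_le_of_finrank_eq
    · rw [Submodule.span_le]
      simpa using hdV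
    · rw [finrank_span_singleton hd0, hdim]
  intro x hx y hy
  have hmem : toR x - toR y ∈ Submodule.span ℝ {toR d} := by
    rw [hspan]
    exact vsub_mem_vectorSpan ℝ (Set.mem_image_of_mem toR hx)
      (Set.mem_image_of_mem toR hy)
  obtain ⟨t, ht⟩ := Submodule.mem_span_singleton.mp hmem
  have hti0 : t = (x i0 : ℝ) - (y i0 : ℝ) := by
    have := congrFun ht i0
    simpa [toR, hi0] using this
  refine ⟨x i0 - y i0, ?_⟩
  funext c
  have hc := congrFun ht c
  simp only [Pi.smul_apply, Pi.sub_apply, smul_eq_mul, toR] at hc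
  rw [hti0] at hc
  have : ((x i0 - y i0 : ℤ) : ℝ) * ((d c : ℤ) : ℝ) = ((x c - y c : ℤ) : ℝ) := by
    push_cast
    linarith [hc]
  have hz : (x i0 - y i0) * d c = x c - y c := by exact_mod_cast this
  simpa [Pi.sub_apply, Pi.smul_apply, smul_eq_mul] using hz.symm
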